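/- Let s be a positive integer, let K be a complex Hadamard matrix of order s+1 that is normalized (all entries of its first row equal 1), and let T be the s×(s+1) matrix consisting of the s noninitial rows of K. Let X, Y be s×s matrices and D an (s+1)×(s+1) matrix with unimodular entries such that the Petrescu array H = [[X, Y, T], [Y, X, T], [T*, T*, D]] is a complex Hadamard matrix of order 3s+1. Then X + Y = −(1/(s+1)) T D* T*. -/

import Mathlib

open Matrix

/-- Petrescu's array: the `(3s+1) × (3s+1)` block matrix
`[[X, Y, T], [Y, X, T], [Tᴴ, Tᴴ, D]]`. -/
def petrescuArray {s : ℕ} (X Y : Matrix (Fin s) (Fin s) ℂ)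
    (T : Matrix (Fin s) (Fin (s + 1)) ℂ) (D : Matrix (Fin (s + 1)) (Fin (s + 1)) ℂ) :
    Matrix ((Fin s ⊕ Fin s) ⊕ Fin (s + 1)) ((Fin s ⊕ Fin s) ⊕ Fin (s + 1)) ℂ :=
  Matrix.fromBlocks (Matrix.fromBlocks X Y Y X) (Matrix.fromRows T T)
    (Matrix.fromCols Tᴴ Tᴴ) D

/-- If Petrescu's array built from the noninitial rows `T` of a normalized complex
Hadamard matrix of order `s+1` and unimodular `X, Y, D` is a complex Hadamard
matrix of order `3s+1`, then `X + Y = -(1/(s+1)) T Dᴴ Tᴴ`. -/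
theorem petrescu_X_add_Y (s : ℕ) (hs : 0 < s)
    (K : Matrix (Fin (s + 1)) (Fin (s + 1)) ℂ)
    (hKuni : ∀ i j, ‖K i j‖ = 1)
    (hKhad : K * Kᴴ = ((s + 1 : ℕ) : ℂ) • 1)
    (hKnorm : ∀ j, K 0 j = 1)
    (T : Matrix (Fin s) (Fin (s + 1)) ℂ)
    (hT : ∀ (i : Fin s) (j : Fin (s + 1)), T i j = K i.succ j)
    (X Y : Matrix (Fin s) (Fin s) ℂ)
    (D : Matrix (Fin (s + 1)) (Fin (s + 1)) ℂ)
    (hX : ∀ i j, ‖X i j‖ = 1)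
    (hY : ∀ i j, ‖Y i j‖ = 1)
    (hD : ∀ i j, ‖D i j‖ = 1)
    (hHuni : ∀ i j, ‖petrescuArray X Y T D i j‖ = 1)
    (hHhad : petrescuArray X Y T D * (petrescuArray X Y T D)ᴴ =
      ((3 * s + 1 : ℕ) : ℂ) • 1) :
    X + Y = -(((s : ℂ) + 1)⁻¹ • (T * Dᴴ * Tᴴ)) := by

  classical
  -- `T * Tᴴ = (s+1) • 1` since the rows of `K` are orthogonal of norm `s+1`.
  have hTT : T * Tᴴ = ((s : ℂ) + 1) • (1 : Matrix (Fin s) (Fin s) ℂ) := by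
    ext i j
    have h := congrFun (congrFun hKhad i.succ) j.succ
    simp only [Matrix.mul_apply, Matrix.conjTranspose_apply, Matrix.smul_apply,
      Matrix.one_apply, Fin.succ_inj] at h ⊢
    simp only [hT]
    rw [h]
    push_cast
    by_cases hij : i = j <;> simp [hij]
  -- extract the (1,2) block of the Hadamard condition
  have key : (X + Y) * T = -(T * Dᴴ) := by
    have h := hHhad
    rw [petrescuArray, Matrix.fromBlocks_conjTranspose,
      Matrix.conjTranspose_fromRows_eq_fromCols_conjTranspose,
      Matrix.conjTranspose_fromCols_eq_fromRows_conjTranspose,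
      Matrix.conjTranspose_conjTranspose,
      Matrix.fromBlocks_multiply, ← Matrix.fromBlocks_one,
      Matrix.fromBlocks_smul, Matrix.fromBlocks_inj] at h
    obtain ⟨-, h12, -, -⟩ := h
    rw [Matrix.fromBlocks_mul_fromRows, Matrix.fromRows_mul, smul_zero] at h12
    have h1 := congrFun h12
    have h2 : X * T + Y * T + T * Dᴴ = 0 := by
      ext i j
      have := congrFun (h1 (Sum.inl i)) j
      simpa [Matrix.fromRows_apply_inl, add_assoc] using this
    rw [Matrix.add_mul, eq_neg_iff_add_eq_zero]
    exact h2
  have hne : ((s : ℂ) + 1) ≠ 0 := by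
    have : ((s : ℂ) + 1) = ((s + 1 : ℕ) : ℂ) := by push_cast; ring
    rw [this]
    exact_mod_cast Nat.succ_ne_zero s
  have h3 : ((s : ℂ) + 1) • (X + Y) = -(T * Dᴴ * Tᴴ) := by
    calc ((s : ℂ) + 1) • (X + Y) = (X + Y) * (((s : ℂ) + 1) • 1) := by
          rw [Matrix.mul_smul, Matrix.mul_one]
      _ = (X + Y) * (T * Tᴴ) := by rw [hTT]
      _ = ((X + Y) * T) * Tᴴ := by rw [Matrix.mul_assoc]
      _ = -(T * Dᴴ * Tᴴ) := by rw [key, Matrix.neg_mul, Matrix.mul_assoc]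
  calc X + Y = (((s : ℂ) + 1)⁻¹ • (((s : ℂ) + 1) • (X + Y))) := by
        rw [smul_smul, inv_mul_cancel₀ hne, one_smul]
    _ = -(((s : ℂ) + 1)⁻¹ • (T * Dᴴ * Tᴴ)) := by rw [h3, smul_neg]
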